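/- Correctness of sampling-based choice selection: let A be a nonempty finite set and for each a ∈ A let X_{a,1}, …, X_{a,N} be independent random variables on a probability space, each taking values in [0,1] and each with mean μ_a. Let ε > 0, 0 < δ ≤ 1, and N ≥ log(2|A|/δ) / (2ε²), and let â be any (random) element of A maximizing the empirical mean a ↦ (1/N) ∑_{i=1}^N X_{a,i}. Then with probability at least 1 − δ, μ_â ≥ max_{a ∈ A} μ_a − 2ε. -/

import Mathlib

open MeasureTheory ProbabilityTheory Real

private lemma D_pos (p : ℝ) (hp0 : 0 ≤ p) (hp1 : p ≤ 1) (h : ℝ) :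
    0 < 1 - p + p * Real.exp h := by
  rcases hp0.eq_or_lt with h0 | h0
  · simp [← h0]
  · nlinarith [mul_pos h0 (Real.exp_pos h)]

private lemma hoeffding_analytic (p : ℝ) (hp0 : 0 ≤ p) (hp1 : p ≤ 1) (t : ℝ) :
    1 - p + p * Real.exp t ≤ Real.exp (t * p + t ^ 2 / 8) := by
  set D : ℝ → ℝ := fun h => 1 - p + p * Real.exp h with hDdef
  have hDpos : ∀ h, 0 < D h := fun h => D_pos p hp0 hp1 h
  set g : ℝ → ℝ := fun h => h ^ 2 / 8 + p * h - Real.log (D h) with hgdef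
  set g1 : ℝ → ℝ := fun h => h / 4 + p - p * Real.exp h / D h with hg1def
  set g2 : ℝ → ℝ := fun h =>
    1 / 4 - (p * Real.exp h * D h - p * Real.exp h * (p * Real.exp h)) / (D h) ^ 2 with hg2def
  have hD : ∀ h, HasDerivAt D (p * Real.exp h) h := fun h => by
    exact ((Real.hasDerivAt_exp h).const_mul p).const_add (1 - p)
  have hg : ∀ h, HasDerivAt g (g1 h) h := by
    intro h
    have hlog : HasDerivAt (fun x => Real.log (D x)) (p * Real.exp h / D h) h :=
      (hD h).log (hDpos h).ne'
    have h1 : HasDerivAt (fun x : ℝ => x ^ 2 / 8 + p * x) (h / 4 + p) h := by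
      have := ((hasDerivAt_pow 2 h).div_const 8).add ((hasDerivAt_id h).const_mul p)
      refine this.congr_deriv ?_
      simp
      ring
    exact h1.sub hlog
  have hg1 : ∀ h, HasDerivAt g1 (g2 h) h := by
    intro h
    have hq : HasDerivAt (fun x => p * Real.exp x / D x)
        ((p * Real.exp h * D h - p * Real.exp h * (p * Real.exp h)) / (D h) ^ 2) h :=
      HasDerivAt.div ((Real.hasDerivAt_exp h).const_mul p) (hD h) (hDpos h).ne'
    have h1 : HasDerivAt (fun x : ℝ => x / 4 + p) (1 / 4) h := by
      simpa using ((hasDerivAt_id h).div_const 4).add_const p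
    exact h1.sub hq
  have hg2 : ∀ h, 0 ≤ g2 h := by
    intro h
    have hE : 0 ≤ p * Real.exp h := mul_nonneg hp0 (Real.exp_pos h).le
    have hD2 : 0 < (D h) ^ 2 := pow_pos (hDpos h) 2
    have hDh : D h = 1 - p + p * Real.exp h := rfl
    have : (p * Real.exp h * D h - p * Real.exp h * (p * Real.exp h)) / (D h) ^ 2 ≤ 1 / 4 := by
      rw [div_le_iff₀ hD2]
      nlinarith [sq_nonneg (1 - p - p * Real.exp h)]
    simp only [hg2def]
    linarith
  have hg1mono : Monotone g1 :=
    monotone_of_deriv_nonneg (fun x => (hg1 x).differentiableAt)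
      (fun x => by rw [(hg1 x).deriv]; exact hg2 x)
  have hg10 : g1 0 = 0 := by
    simp only [hg1def, hDdef]
    norm_num [Real.exp_zero]
  have hg0 : g 0 = 0 := by
    simp only [hgdef, hDdef]
    norm_num [Real.exp_zero]
  have key : ∀ h, 0 ≤ g h := by
    intro h
    rcases lt_trichotomy h 0 with hh | hh | hh
    · obtain ⟨c, hc, hceq⟩ := exists_hasDerivAt_eq_slope g g1 hh
        (fun x _ => (hg x).continuousAt.continuousWithinAt) (fun x _ => hg x)
      have hc0 : g1 c ≤ 0 := hg10 ▸ hg1mono hc.2.le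
      rw [hg0] at hceq
      have hpos : 0 < 0 - h := by linarith
      have := (div_le_iff₀ hpos).1 (hceq ▸ hc0)
      linarith
    · simp [hh, hg0]
    · obtain ⟨c, hc, hceq⟩ := exists_hasDerivAt_eq_slope g g1 hh
        (fun x _ => (hg x).continuousAt.continuousWithinAt) (fun x _ => hg x)
      have hc0 : 0 ≤ g1 c := hg10 ▸ hg1mono hc.1.le
      rw [hg0] at hceq
      have hpos : 0 < h - 0 := by linarith
      have := (le_div_iff₀ hpos).1 (hceq ▸ hc0)
      linarith
  have hlog : Real.log (D t) ≤ t * p + t ^ 2 / 8 := by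
    have := key t
    simp only [hgdef] at this
    linarith
  calc D t ≤ Real.exp (Real.log (D t)) := by rw [Real.exp_log (hDpos t)]
    _ ≤ Real.exp (t * p + t ^ 2 / 8) := Real.exp_le_exp.2 hlog

private lemma integrable_of_Icc {Ω : Type*} [MeasurableSpace Ω] (μ : Measure Ω)
    [IsProbabilityMeasure μ] (X : Ω → ℝ) (hX : Measurable X)
    (hb : ∀ ω, X ω ∈ Set.Icc (0 : ℝ) 1) : Integrable X μ := by
  refine (integrable_const (1 : ℝ)).mono' hX.aestronglyMeasurable ?_
  filter_upwards with ω
  rw [Real.norm_eq_abs]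
  exact abs_le.mpr ⟨by linarith [(hb ω).1], (hb ω).2⟩

private lemma integrable_exp_of_Icc {Ω : Type*} [MeasurableSpace Ω] (μ : Measure Ω)
    [IsProbabilityMeasure μ] (X : Ω → ℝ) (hX : Measurable X)
    (hb : ∀ ω, X ω ∈ Set.Icc (0 : ℝ) 1) (t : ℝ) :
    Integrable (fun ω => Real.exp (t * X ω)) μ := by
  refine (integrable_const (Real.exp |t|)).mono' ((hX.const_mul t).exp).aestronglyMeasurable ?_
  filter_upwards with ω
  rw [Real.norm_eq_abs, abs_of_pos (Real.exp_pos _), Real.exp_le_exp]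
  calc t * X ω ≤ |t * X ω| := le_abs_self _
    _ = |t| * |X ω| := abs_mul t _
    _ ≤ |t| * 1 := by
        have := abs_le.mpr ⟨by linarith [(hb ω).1], (hb ω).2⟩
        exact mul_le_mul_of_nonneg_left this (abs_nonneg t)
    _ = |t| := mul_one _

private lemma mgf_le_of_Icc {Ω : Type*} [MeasurableSpace Ω] (μ : Measure Ω)
    [IsProbabilityMeasure μ] (X : Ω → ℝ) (hX : Measurable X)
    (hb : ∀ ω, X ω ∈ Set.Icc (0 : ℝ) 1) (t : ℝ) :
    mgf X μ t ≤ Real.exp (t * (∫ ω, X ω ∂μ) + t ^ 2 / 8) := by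
  have intX : Integrable X μ := integrable_of_Icc μ X hX hb
  set m : ℝ := ∫ ω, X ω ∂μ with hm
  have hm0 : 0 ≤ m := integral_nonneg fun ω => (hb ω).1
  have hm1 : m ≤ 1 := by
    calc m ≤ ∫ _ω, (1 : ℝ) ∂μ := integral_mono intX (integrable_const 1) fun ω => (hb ω).2
      _ = 1 := by simp
  have hpt : ∀ ω, Real.exp (t * X ω) ≤ 1 - X ω + X ω * Real.exp t := by
    intro ω
    have hx0 := (hb ω).1
    have hx1 := (hb ω).2
    have := convexOn_exp.2 (Set.mem_univ (0 : ℝ)) (Set.mem_univ t)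
      (by linarith : (0:ℝ) ≤ 1 - X ω) hx0 (by ring)
    simp only [smul_eq_mul, mul_zero, zero_add, Real.exp_zero, mul_one] at this
    calc Real.exp (t * X ω) = Real.exp ((1 - X ω) * 0 + X ω * t) := by ring_nf
      _ ≤ (1 - X ω) + X ω * Real.exp t := by
          have h2 := convexOn_exp.2 (Set.mem_univ (0 : ℝ)) (Set.mem_univ t)
            (by linarith : (0:ℝ) ≤ 1 - X ω) hx0 (by ring)
          simpa [smul_eq_mul, Real.exp_zero] using h2
  have hint : mgf X μ t ≤ 1 - m + m * Real.exp t := by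
    have h1 : mgf X μ t ≤ ∫ ω, (1 - X ω + X ω * Real.exp t) ∂μ :=
      integral_mono (integrable_exp_of_Icc μ X hX hb t)
        (((integrable_const 1).sub intX).add (intX.mul_const _)) hpt
    have h2 : ∫ ω, (1 - X ω + X ω * Real.exp t) ∂μ = 1 - m + m * Real.exp t := by
      have hA : Integrable (fun ω => 1 - X ω) μ := by
        exact (integrable_const (1 : ℝ)).sub intX
      have hB : Integrable (fun ω => X ω * Real.exp t) μ := intX.mul_const _
      rw [integral_add hA hB, integral_sub (integrable_const 1) intX, integral_mul_const]
      simp [hm]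
    linarith
  calc mgf X μ t ≤ 1 - m + m * Real.exp t := hint
    _ ≤ Real.exp (t * m + t ^ 2 / 8) := hoeffding_analytic m hm0 hm1 t

private lemma tail_bound {Ω : Type*} [MeasurableSpace Ω] (μ : Measure Ω)
    [IsProbabilityMeasure μ] (N : ℕ) (Y : Fin N → Ω → ℝ) (m ε : ℝ) (hε : 0 < ε)
    (hmeas : ∀ i, Measurable (Y i))
    (hindep : iIndepFun Y μ)
    (hbdd : ∀ i ω, Y i ω ∈ Set.Icc (0 : ℝ) 1) (hmean : ∀ i, ∫ ω, Y i ω ∂μ = m) :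
    (μ {ω | (N : ℝ) * (m + ε) ≤ (∑ i, Y i) ω}).toReal ≤ Real.exp (-(2 * N * ε ^ 2)) ∧
    (μ {ω | (∑ i, Y i) ω ≤ (N : ℝ) * (m - ε)}).toReal ≤ Real.exp (-(2 * N * ε ^ 2)) := by
  have h_int : ∀ t : ℝ, Integrable (fun ω => Real.exp (t * (∑ i, Y i) ω)) μ := fun t =>
    hindep.integrable_exp_mul_sum hmeas
      (fun i _ => integrable_exp_of_Icc μ (Y i) (hmeas i) (hbdd i) t)
  have hmgf : ∀ t : ℝ, mgf (∑ i, Y i) μ t ≤ Real.exp ((N : ℝ) * (t * m + t ^ 2 / 8)) := by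
    intro t
    rw [hindep.mgf_sum hmeas Finset.univ]
    calc ∏ i : Fin N, mgf (Y i) μ t
        ≤ ∏ _i : Fin N, Real.exp (t * m + t ^ 2 / 8) :=
          Finset.prod_le_prod (fun i _ => mgf_nonneg)
            (fun i _ => by
              have := mgf_le_of_Icc μ (Y i) (hmeas i) (hbdd i) t
              rwa [hmean i] at this)
      _ = Real.exp ((N : ℝ) * (t * m + t ^ 2 / 8)) := by
          rw [Finset.prod_const, Finset.card_univ, Fintype.card_fin, ← Real.exp_nat_mul]
  constructor
  · calc (μ {ω | (N : ℝ) * (m + ε) ≤ (∑ i, Y i) ω}).toReal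
        ≤ Real.exp (-(4 * ε) * ((N : ℝ) * (m + ε))) * mgf (∑ i, Y i) μ (4 * ε) :=
          measure_ge_le_exp_mul_mgf _ (by positivity) (h_int _)
      _ ≤ Real.exp (-(4 * ε) * ((N : ℝ) * (m + ε))) *
            Real.exp ((N : ℝ) * (4 * ε * m + (4 * ε) ^ 2 / 8)) :=
          mul_le_mul_of_nonneg_left (hmgf _) (Real.exp_pos _).le
      _ = Real.exp (-(2 * N * ε ^ 2)) := by rw [← Real.exp_add]; ring_nf
  · calc (μ {ω | (∑ i, Y i) ω ≤ (N : ℝ) * (m - ε)}).toReal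
        ≤ Real.exp (-(-(4 * ε)) * ((N : ℝ) * (m - ε))) * mgf (∑ i, Y i) μ (-(4 * ε)) :=
          measure_le_le_exp_mul_mgf _ (by linarith) (h_int _)
      _ ≤ Real.exp (-(-(4 * ε)) * ((N : ℝ) * (m - ε))) *
            Real.exp ((N : ℝ) * (-(4 * ε) * m + (-(4 * ε)) ^ 2 / 8)) :=
          mul_le_mul_of_nonneg_left (hmgf _) (Real.exp_pos _).le
      _ = Real.exp (-(2 * N * ε ^ 2)) := by rw [← Real.exp_add]; ring_nf
/-- Correctness of sampling-based choice selection: under the setting of the uniform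
sample-complexity bound (finite nonempty `A`, for each `a` independent `[0,1]`-valued
samples `X a 1, …, X a N` with mean `m a`, `ε > 0`, `0 < δ ≤ 1`,
`N ≥ log (2|A|/δ) / (2ε²)`), if `â : Ω → A` is any (random) maximizer of the empirical
mean `a ↦ (1/N) ∑ i, X a i`, then with probability at least `1 - δ`,
`m (â ω) ≥ max_a m a - 2ε`. -/
theorem sampling_based_choice_selection
    {Ω : Type*} [MeasurableSpace Ω] (μ : Measure Ω) [IsProbabilityMeasure μ]
    {A : Type*} [Fintype A] [Nonempty A]
    (N : ℕ) (X : A → Fin N → Ω → ℝ) (m : A → ℝ)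
    (hmeas : ∀ (a : A) (i : Fin N), Measurable (X a i))
    (hindep : ∀ a : A,
      iIndepFun (X a) μ)
    (hbdd : ∀ (a : A) (i : Fin N) (ω : Ω), X a i ω ∈ Set.Icc (0 : ℝ) 1)
    (hmean : ∀ (a : A) (i : Fin N), ∫ ω, X a i ω ∂μ = m a)
    (ε δ : ℝ) (hε : 0 < ε) (hδ0 : 0 < δ) (hδ1 : δ ≤ 1)
    (hN : (N : ℝ) ≥ Real.log (2 * Fintype.card A / δ) / (2 * ε ^ 2))
    (ahat : Ω → A)
    (hahat : ∀ (ω : Ω) (a : A),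
      (1 / (N : ℝ)) * ∑ i : Fin N, X a i ω ≤ (1 / (N : ℝ)) * ∑ i : Fin N, X (ahat ω) i ω) :
    ENNReal.ofReal (1 - δ) ≤
      μ {ω : Ω | m (ahat ω) ≥ Finset.univ.sup' Finset.univ_nonempty m - 2 * ε} := by
  classical
  set K : ℕ := Fintype.card A with hK
  have hK1 : (1 : ℝ) ≤ K := by exact_mod_cast Fintype.card_pos
  have h1lt : 1 < 2 * (K : ℝ) / δ := (one_lt_div hδ0).2 (by linarith)
  have hlogpos : 0 < Real.log (2 * (K : ℝ) / δ) := Real.log_pos h1lt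
  have hNpos : (0 : ℝ) < N := lt_of_lt_of_le (by positivity) hN
  -- key exponential bound
  have hNb : Real.log (2 * (K : ℝ) / δ) ≤ 2 * N * ε ^ 2 := by
    have := (div_le_iff₀ (by positivity : (0:ℝ) < 2 * ε ^ 2)).1 hN
    linarith
  have hexpb : Real.exp (-(2 * N * ε ^ 2)) ≤ δ / (2 * K) := by
    calc Real.exp (-(2 * N * ε ^ 2)) ≤ Real.exp (-(Real.log (2 * (K : ℝ) / δ))) :=
          Real.exp_le_exp.2 (by linarith)
      _ = (2 * (K : ℝ) / δ)⁻¹ := by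
          rw [Real.exp_neg, Real.exp_log (by positivity)]
      _ = δ / (2 * K) := by rw [inv_div]
  have hKexp : (K : ℝ) * (2 * Real.exp (-(2 * N * ε ^ 2))) ≤ δ := by
    have h2K : (0 : ℝ) < 2 * K := by linarith
    have := mul_le_mul_of_nonneg_left hexpb h2K.le
    rw [mul_div_cancel₀ _ h2K.ne'] at this
    linarith
  -- bad events
  set S : A → Ω → ℝ := fun a => ∑ i, X a i with hS
  set Bad : A → Set Ω := fun a =>
    {ω | (N : ℝ) * (m a + ε) ≤ S a ω} ∪ {ω | S a ω ≤ (N : ℝ) * (m a - ε)} with hBad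
  have hSmeas : ∀ a, Measurable (S a) := by
    intro a
    have : Measurable (fun ω => ∑ i, X a i ω) :=
      Finset.measurable_sum Finset.univ (fun i _ => hmeas a i)
    convert this using 1
    funext ω
    simp [hS, Finset.sum_apply]
  have hBadMeas : ∀ a, MeasurableSet (Bad a) := fun a =>
    (measurableSet_le measurable_const (hSmeas a)).union
      (measurableSet_le (hSmeas a) measurable_const)
  have hBadLe : ∀ a, μ (Bad a) ≤ ENNReal.ofReal (2 * Real.exp (-(2 * N * ε ^ 2))) := by
    intro a
    obtain ⟨h1, h2⟩ := tail_bound μ N (X a) (m a) ε hε (hmeas a) (hindep a)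
      (fun i ω => hbdd a i ω) (fun i => hmean a i)
    calc μ (Bad a) ≤ μ {ω | (N : ℝ) * (m a + ε) ≤ S a ω} + μ {ω | S a ω ≤ (N : ℝ) * (m a - ε)} :=
          measure_union_le _ _
      _ ≤ ENNReal.ofReal (Real.exp (-(2 * N * ε ^ 2))) +
            ENNReal.ofReal (Real.exp (-(2 * N * ε ^ 2))) := by
          gcongr
          · exact (ENNReal.le_ofReal_iff_toReal_le (measure_ne_top μ _)
              (Real.exp_pos _).le).2 h1
          · exact (ENNReal.le_ofReal_iff_toReal_le (measure_ne_top μ _)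
              (Real.exp_pos _).le).2 h2
      _ = ENNReal.ofReal (2 * Real.exp (-(2 * N * ε ^ 2))) := by
          rw [← ENNReal.ofReal_add (Real.exp_pos _).le (Real.exp_pos _).le]
          ring_nf
  have hUnion : μ (⋃ a, Bad a) ≤ ENNReal.ofReal δ := by
    calc μ (⋃ a, Bad a) ≤ ∑ a, μ (Bad a) := measure_iUnion_fintype_le μ Bad
      _ ≤ ∑ _a : A, ENNReal.ofReal (2 * Real.exp (-(2 * N * ε ^ 2))) :=
          Finset.sum_le_sum fun a _ => hBadLe a
      _ = ENNReal.ofReal ((K : ℝ) * (2 * Real.exp (-(2 * N * ε ^ 2)))) := by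
          rw [Finset.sum_const, Finset.card_univ, ← hK, nsmul_eq_mul,
            ← ENNReal.ofReal_natCast, ← ENNReal.ofReal_mul (by positivity)]
      _ ≤ ENNReal.ofReal δ := ENNReal.ofReal_le_ofReal hKexp
  -- good event inclusion
  have hsub : (⋃ a, Bad a)ᶜ ⊆
      {ω : Ω | m (ahat ω) ≥ Finset.univ.sup' Finset.univ_nonempty m - 2 * ε} := by
    intro ω hω
    simp only [Set.mem_compl_iff, Set.mem_iUnion, not_exists, hBad, Set.mem_union,
      Set.mem_setOf_eq, not_or, not_le] at hω
    obtain ⟨a0, _, ha0⟩ := Finset.exists_mem_eq_sup' Finset.univ_nonempty m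
    have hle : S a0 ω ≤ S (ahat ω) ω := by
      have h := hahat ω a0
      have hiN : (0 : ℝ) < 1 / N := by positivity
      have := (mul_le_mul_iff_of_pos_left hiN).1 h
      simpa [hS, Finset.sum_apply] using this
    have h1 := (hω (ahat ω)).1
    have h2 := (hω a0).2
    have : (N : ℝ) * (m a0 - ε) < (N : ℝ) * (m (ahat ω) + ε) := by linarith
    have hm2 : m a0 - ε < m (ahat ω) + ε := lt_of_mul_lt_mul_left this hNpos.le
    simp only [Set.mem_setOf_eq, ha0]
    linarith
  calc ENNReal.ofReal (1 - δ) = 1 - ENNReal.ofReal δ := by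
        rw [ENNReal.ofReal_sub _ hδ0.le, ENNReal.ofReal_one]
    _ ≤ 1 - μ (⋃ a, Bad a) := tsub_le_tsub_left hUnion 1
    _ = μ ((⋃ a, Bad a)ᶜ) := (prob_compl_eq_one_sub (MeasurableSet.iUnion hBadMeas)).symm
    _ ≤ _ := measure_mono hsub
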